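/- Let M and X be two k-dimensional linear subspaces of R^n, and let M^⊥ and X^⊥ be their orthogonal complements. Then ∠(M^⊥, X^⊥) = ∠(M, X), where ∠(U,V) = (det G(B_U, B_V))^2 / (det G(B_U,B_U) · det G(B_V,B_V)) for any choice of bases B_U of U and B_V of V. -/

import Mathlib

open Matrix
open scoped RealInnerProductSpace

namespace AngleAux

variable {n : ℕ}

open Submodule Set Module

noncomputable def gram {a b : ℕ} (v : Fin a → EuclideanSpace ℝ (Fin n))
    (x : Fin b → EuclideanSpace ℝ (Fin n)) : Matrix (Fin a) (Fin b) ℝ :=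
  Matrix.of fun i j => ⟪v i, x j⟫

lemma gram_smul {a b c d : ℕ} (v : Fin a → EuclideanSpace ℝ (Fin n))
    (x : Fin b → EuclideanSpace ℝ (Fin n))
    (S : Matrix (Fin c) (Fin a) ℝ) (T : Matrix (Fin d) (Fin b) ℝ)
    (w : Fin c → EuclideanSpace ℝ (Fin n)) (y : Fin d → EuclideanSpace ℝ (Fin n))
    (hw : ∀ i, w i = ∑ j, S i j • v j) (hy : ∀ i, y i = ∑ j, T i j • x j) :
    gram w y = S * gram v x * Tᵀ := by
  ext i j
  simp only [gram, Matrix.mul_apply, Matrix.of_apply, hw, hy, sum_inner, inner_sum,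
    real_inner_smul_left, real_inner_smul_right, Matrix.transpose_apply, Finset.sum_mul,
    Finset.mul_sum]
  rw [Finset.sum_comm]
  conv_rhs => rw [Finset.sum_comm]
  refine Finset.sum_congr rfl fun p _ => Finset.sum_congr rfl fun q _ => ?_
  ring

lemma gram_orthonormal {a : ℕ} (e : Fin a → EuclideanSpace ℝ (Fin n))
    (he : Orthonormal ℝ e) : gram e e = 1 := by
  ext i j
  show (⟪e i, e j⟫ : ℝ) = (1 : Matrix (Fin a) (Fin a) ℝ) i j
  rw [orthonormal_iff_ite.mp he i j, Matrix.one_apply]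

lemma ratio_eq {a : ℕ} (v e : Fin a → EuclideanSpace ℝ (Fin n))
    (x f : Fin a → EuclideanSpace ℝ (Fin n))
    (S : Matrix (Fin a) (Fin a) ℝ) (T : Matrix (Fin a) (Fin a) ℝ)
    (hS : S.det ≠ 0) (hT : T.det ≠ 0)
    (hw : ∀ i, v i = ∑ j, S i j • e j) (hy : ∀ i, x i = ∑ j, T i j • f j) :
    (gram v x).det ^ 2 / ((gram v v).det * (gram x x).det)
      = (gram e f).det ^ 2 / ((gram e e).det * (gram f f).det) := by
  rw [gram_smul e f S T v x hw hy, gram_smul e e S S v v hw hw,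
    gram_smul f f T T x x hy hy]
  simp only [Matrix.det_mul, Matrix.det_transpose]
  have h : S.det ^ 2 * T.det ^ 2 ≠ 0 := by positivity
  rw [show (S.det * (gram e f).det * T.det) ^ 2
        = (S.det ^ 2 * T.det ^ 2) * ((gram e f).det ^ 2) by ring,
    show S.det * (gram e e).det * S.det * (T.det * (gram f f).det * T.det)
        = (S.det ^ 2 * T.det ^ 2) * ((gram e e).det * (gram f f).det) by ring,
    mul_div_mul_left _ _ h]

/-- Every linearly independent spanning family of a subspace of the right dimension can be
written in terms of an orthonormal family spanning the same subspace, via an invertible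
matrix. -/
lemma exists_orthonormal_change (W : Submodule ℝ (EuclideanSpace ℝ (Fin n))) {m : ℕ}
    (hW : finrank ℝ W = m) (v : Fin m → EuclideanSpace ℝ (Fin n))
    (hv : Submodule.span ℝ (Set.range v) = W) (hvi : LinearIndependent ℝ v) :
    ∃ (e : Fin m → EuclideanSpace ℝ (Fin n)) (S : Matrix (Fin m) (Fin m) ℝ),
      Orthonormal ℝ e ∧ Submodule.span ℝ (Set.range e) = W ∧
      (∀ i, v i = ∑ j, S i j • e j) ∧ S.det ≠ 0 := by
  let onb : OrthonormalBasis (Fin m) ℝ W :=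
    (stdOrthonormalBasis ℝ W).reindex (finCongr hW)
  refine ⟨fun i => (onb i : EuclideanSpace ℝ (Fin n)), ?_, ?_, ?_, ?_, ?_⟩
  · exact fun i j => (onb.toBasis.repr (⟨v i, by rw [← hv]; exact subset_span ⟨i, rfl⟩⟩ : W)) j
  · exact onb.orthonormal.comp_linearIsometry W.subtypeₗᵢ
  · have hrange : Set.range (fun i => (onb i : EuclideanSpace ℝ (Fin n)))
        = W.subtype '' Set.range onb := by
      ext y; simp [Set.range_comp]
    rw [hrange, ← Submodule.map_span, show Submodule.span ℝ (Set.range onb) = ⊤ by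
        rw [← onb.coe_toBasis]; exact onb.toBasis.span_eq, Submodule.map_subtype_top]
  · intro i
    have h1 : (⟨v i, by rw [← hv]; exact subset_span ⟨i, rfl⟩⟩ : W)
        = ∑ j, (onb.toBasis.repr (⟨v i, by rw [← hv]; exact subset_span ⟨i, rfl⟩⟩ : W)) j
            • onb.toBasis j := (onb.toBasis.sum_repr _).symm
    have := congrArg (W.subtype) h1
    simpa [OrthonormalBasis.coe_toBasis] using this
  · -- determinant nonzero
    set vW : Fin m → W := fun i => ⟨v i, by rw [← hv]; exact subset_span ⟨i, rfl⟩⟩ with hvW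
    have hli : LinearIndependent ℝ vW := by
      apply LinearIndependent.of_comp W.subtype
      exact hvi
    have hsp : Submodule.span ℝ (Set.range vW) = ⊤ := by
      apply Submodule.map_injective_of_injective W.injective_subtype
      rw [Submodule.map_span, Submodule.map_top, Submodule.range_subtype]
      rw [← Set.range_comp]
      exact hv
    let vB : Basis (Fin m) ℝ W := Basis.mk hli (le_of_eq hsp.symm)
    have hmat : (Matrix.of fun i j =>
        (onb.toBasis.repr (vW i)) j) = (onb.toBasis.toMatrix vB)ᵀ := by
      ext i j
      simp [Basis.toMatrix, vB, Basis.mk_apply]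
    have hunit : (onb.toBasis.toMatrix vB).det ≠ 0 := by
      have h1 := onb.toBasis.toMatrix_mul_toMatrix_flip vB
      intro h0
      have := congrArg Matrix.det h1
      rw [Matrix.det_mul, h0, zero_mul, Matrix.det_one] at this
      exact zero_ne_one this
    have : (Matrix.of fun i j => (onb.toBasis.repr (vW i)) j).det ≠ 0 := by
      rw [hmat, Matrix.det_transpose]; exact hunit
    exact this

lemma onb_gram_mul_transpose {ι κ : Type*} [Fintype ι] [Fintype κ] [DecidableEq ι]
    (u : OrthonormalBasis ι ℝ (EuclideanSpace ℝ (Fin n)))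
    (w : OrthonormalBasis κ ℝ (EuclideanSpace ℝ (Fin n))) :
    (Matrix.of fun s t => (⟪u s, w t⟫ : ℝ)) * (Matrix.of fun s t => (⟪u s, w t⟫ : ℝ))ᵀ
      = 1 := by
  ext s t
  simp only [Matrix.mul_apply, Matrix.of_apply, Matrix.transpose_apply]
  have : ∀ j, (⟪u t, w j⟫ : ℝ) = ⟪w j, u t⟫ := fun j => real_inner_comm _ _
  calc ∑ j, (⟪u s, w j⟫ : ℝ) * ⟪u t, w j⟫
      = ∑ j, (⟪u s, w j⟫ : ℝ) * ⟪w j, u t⟫ := by simp_rw [this]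
    _ = ⟪u s, u t⟫ := w.sum_inner_mul_inner _ _
    _ = (1 : Matrix ι ι ℝ) s t := by
        rw [orthonormal_iff_ite.mp u.orthonormal, Matrix.one_apply]

/-- The key determinant identity for orthonormal bases adapted to complementary
subspaces. -/
lemma key {a b : ℕ} (e f : Fin a → EuclideanSpace ℝ (Fin n))
    (e' f' : Fin b → EuclideanSpace ℝ (Fin n))
    (he : Orthonormal ℝ (Sum.elim e e')) (hf : Orthonormal ℝ (Sum.elim f f'))
    (hesp : ⊤ ≤ Submodule.span ℝ (Set.range (Sum.elim e e')))
    (hfsp : ⊤ ≤ Submodule.span ℝ (Set.range (Sum.elim f f'))) :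
    (gram e' f').det ^ 2 = (gram e f).det ^ 2 := by
  let Be : OrthonormalBasis (Fin a ⊕ Fin b) ℝ (EuclideanSpace ℝ (Fin n)) :=
    OrthonormalBasis.mk he hesp
  let Bf : OrthonormalBasis (Fin a ⊕ Fin b) ℝ (EuclideanSpace ℝ (Fin n)) :=
    OrthonormalBasis.mk hf hfsp
  have hC : (Matrix.of fun s t => (⟪Be s, Bf t⟫ : ℝ))
      = Matrix.fromBlocks (gram e f) (gram e f') (gram e' f) (gram e' f') := by
    ext s t
    cases s <;> cases t <;> simp [Be, Bf, gram, Matrix.fromBlocks, OrthonormalBasis.coe_mk]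
  have h1 : Matrix.fromBlocks (gram e f) (gram e f') (gram e' f) (gram e' f') *
      (Matrix.fromBlocks (gram e f) (gram e f') (gram e' f) (gram e' f'))ᵀ = 1 := by
    rw [← hC]; exact onb_gram_mul_transpose Be Bf
  have h2 : (Matrix.fromBlocks (gram e f) (gram e f') (gram e' f) (gram e' f'))ᵀ *
      Matrix.fromBlocks (gram e f) (gram e f') (gram e' f) (gram e' f') = 1 := by
    have hCt : (Matrix.of fun s t => (⟪Bf s, Be t⟫ : ℝ))
        = (Matrix.fromBlocks (gram e f) (gram e f') (gram e' f) (gram e' f'))ᵀ := by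
      rw [← hC]
      ext s t
      simp only [Matrix.of_apply, Matrix.transpose_apply]
      exact real_inner_comm _ _
    have h := onb_gram_mul_transpose Bf Be
    rw [hCt, Matrix.transpose_transpose] at h
    exact h
  -- extract blocks
  rw [Matrix.fromBlocks_transpose, Matrix.fromBlocks_multiply, ← Matrix.fromBlocks_one] at h1 h2
  have hA : gram e f * (gram e f)ᵀ + gram e f' * (gram e f')ᵀ = 1 :=
    (Matrix.fromBlocks_inj.mp h1).1
  have hD : (gram e f')ᵀ * gram e f' + (gram e' f')ᵀ * gram e' f' = 1 :=
    (Matrix.fromBlocks_inj.mp h2).2.2.2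
  have hA' : gram e f * (gram e f)ᵀ = 1 - gram e f' * (gram e f')ᵀ := eq_sub_of_add_eq hA
  have hD' : (gram e' f')ᵀ * gram e' f' = 1 - (gram e f')ᵀ * gram e f' := eq_sub_of_add_eq' hD
  have hdA : (gram e f).det ^ 2 = (1 - gram e f' * (gram e f')ᵀ).det := by
    rw [← hA', Matrix.det_mul, Matrix.det_transpose, sq]
  have hdD : (gram e' f').det ^ 2 = (1 - (gram e f')ᵀ * gram e f').det := by
    rw [← hD', Matrix.det_mul, Matrix.det_transpose, sq, mul_comm]
  rw [hdA, hdD, Matrix.det_one_sub_mul_comm]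

end AngleAux

open AngleAux Module Submodule Set

/-- For two `k`-dimensional subspaces `M, X` of `ℝ^n`,
`∠(Mᗮ, Xᗮ) = ∠(M, X)`, where `∠(U,V) = det G(B_U,B_V)^2 / (det G(B_U,B_U) · det G(B_V,B_V))`
for any bases `B_U`, `B_V`. -/
theorem angle_orthogonal_complement (n k : ℕ) (hk : k ≤ n)
    (M X : Submodule ℝ (EuclideanSpace ℝ (Fin n)))
    (hM : Module.finrank ℝ M = k) (hX : Module.finrank ℝ X = k)
    (v x : Fin k → EuclideanSpace ℝ (Fin n))
    (hv : Submodule.span ℝ (Set.range v) = M) (hvi : LinearIndependent ℝ v)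
    (hx : Submodule.span ℝ (Set.range x) = X) (hxi : LinearIndependent ℝ x)
    (v' x' : Fin (n - k) → EuclideanSpace ℝ (Fin n))
    (hv' : Submodule.span ℝ (Set.range v') = Mᗮ) (hvi' : LinearIndependent ℝ v')
    (hx' : Submodule.span ℝ (Set.range x') = Xᗮ) (hxi' : LinearIndependent ℝ x') :
    (Matrix.of fun i j => ⟪v' i, x' j⟫).det ^ 2
        / ((Matrix.of fun i j => ⟪v' i, v' j⟫).det *
            (Matrix.of fun i j => ⟪x' i, x' j⟫).det)
      = (Matrix.of fun i j => ⟪v i, x j⟫).det ^ 2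
        / ((Matrix.of fun i j => ⟪v i, v j⟫).det *
            (Matrix.of fun i j => ⟪x i, x j⟫).det) := by
  have hMn : finrank ℝ Mᗮ = n - k := by
    have h := M.finrank_add_finrank_orthogonal
    rw [hM, finrank_euclideanSpace_fin] at h
    omega
  have hXn : finrank ℝ Xᗮ = n - k := by
    have h := X.finrank_add_finrank_orthogonal
    rw [hX, finrank_euclideanSpace_fin] at h
    omega
  obtain ⟨eM, S, heM, heMsp, hvS, hS⟩ := exists_orthonormal_change M hM v hv hvi
  obtain ⟨eX, T, heX, heXsp, hxT, hT⟩ := exists_orthonormal_change X hX x hx hxi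
  obtain ⟨eM', S', heM', heMsp', hvS', hS'⟩ := exists_orthonormal_change Mᗮ hMn v' hv' hvi'
  obtain ⟨eX', T', heX', heXsp', hxT', hT'⟩ := exists_orthonormal_change Xᗮ hXn x' hx' hxi'
  have sum_on : ∀ (W : Submodule ℝ (EuclideanSpace ℝ (Fin n))) {a b : ℕ}
      (e : Fin a → EuclideanSpace ℝ (Fin n)) (e' : Fin b → EuclideanSpace ℝ (Fin n)),
      Orthonormal ℝ e → Orthonormal ℝ e' →
      Submodule.span ℝ (Set.range e) = W → Submodule.span ℝ (Set.range e') = Wᗮ →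
      Orthonormal ℝ (Sum.elim e e') ∧
        ⊤ ≤ Submodule.span ℝ (Set.range (Sum.elim e e')) := by
    intro W a b e e' he he' hsp hsp'
    have hmem : ∀ i, e i ∈ W := fun i => by
      rw [← hsp]; exact subset_span ⟨i, rfl⟩
    have hmem' : ∀ i, e' i ∈ Wᗮ := fun i => by
      rw [← hsp']; exact subset_span ⟨i, rfl⟩
    constructor
    · rw [orthonormal_iff_ite]
      rintro (i | i) (j | j)
      · simpa using orthonormal_iff_ite.mp he i j
      · simpa using (hmem' j) (e i) (hmem i)
      · have h0 := (Submodule.mem_orthogonal _ _).mp (hmem' i) (e j) (hmem j)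
        rw [real_inner_comm] at h0
        simpa using h0
      · simpa using orthonormal_iff_ite.mp he' i j
    · rw [Sum.elim_range, Submodule.span_union, hsp, hsp',
        Submodule.sup_orthogonal_of_hasOrthogonalProjection]
  obtain ⟨honM, hspM⟩ := sum_on M eM eM' heM heM' heMsp heMsp'
  obtain ⟨honX, hspX⟩ := sum_on X eX eX' heX heX' heXsp heXsp'
  have hkey := key eM eX eM' eX' honM honX hspM hspX
  calc (gram v' x').det ^ 2 / ((gram v' v').det * (gram x' x').det)
      = (gram eM' eX').det ^ 2 / ((gram eM' eM').det * (gram eX' eX').det) :=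
        ratio_eq v' eM' x' eX' S' T' hS' hT' hvS' hxT'
    _ = (gram eM' eX').det ^ 2 := by
        rw [gram_orthonormal eM' heM', gram_orthonormal eX' heX']
        simp
    _ = (gram eM eX).det ^ 2 := hkey
    _ = (gram eM eX).det ^ 2 / ((gram eM eM).det * (gram eX eX).det) := by
        rw [gram_orthonormal eM heM, gram_orthonormal eX heX]
        simp
    _ = (gram v x).det ^ 2 / ((gram v v).det * (gram x x).det) :=
        (ratio_eq v eM x eX S T hS hT hvS hxT).symm
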